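/- Let Π be a partition of [n] with associated equivalence i ∼ j, let B ⊆ [n], and let A be a symmetric n×n matrix with A_{ij} = 0 whenever i ≁ j (A is block diagonal with respect to Π). Then for any pair i ≁ j, the partial derivative of det(X_B) with respect to the off-block entry X_{ij}, evaluated at A, equals 0. -/

import Mathlib

open MvPolynomial

/-- The generic symmetric matrix of indeterminates: entry `(i,j)` is the
variable indexed by the unordered pair `{i,j}`, so `X_{ij} = X_{ji}`. -/
noncomputable def genericSymMatrix (n : ℕ) :
    Matrix (Fin n) (Fin n) (MvPolynomial (Sym2 (Fin n)) ℝ) :=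
  Matrix.of fun i j => X (Sym2.mk i j)

/-- The principal minor (as a polynomial) indexed by a subset `B`. -/
noncomputable def genericPrincipalMinor (n : ℕ) (B : Finset (Fin n)) :
    MvPolynomial (Sym2 (Fin n)) ℝ :=
  ((genericSymMatrix n).submatrix (fun i : B => (i : Fin n))
    (fun i : B => (i : Fin n))).det

/-- Leibniz rule for the partial derivative of a finite product. -/
lemma pderiv_finset_prod {σ' : Type*} {ι : Type*} [DecidableEq ι] (v : σ')
    (s : Finset ι) (f : ι → MvPolynomial σ' ℝ) :
    pderiv v (∏ b ∈ s, f b)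
      = ∑ b ∈ s, (∏ b' ∈ s.erase b, f b') * pderiv v (f b) := by
  classical
  induction s using Finset.induction_on with
  | empty => simp
  | @insert a s ha ih =>
    rw [Finset.prod_insert ha, pderiv_mul, ih, Finset.sum_insert ha,
      Finset.erase_insert ha, Finset.mul_sum]
    congr 1
    · ring
    · apply Finset.sum_congr rfl
      intro b hb
      have hba : a ≠ b := by rintro rfl; exact ha hb
      rw [Finset.erase_insert_of_ne (Ne.symm (fun h => hba h.symm))]
      rw [Finset.prod_insert (fun h => ha (Finset.mem_of_mem_erase h))]
      ring

/-- If a permutation moves some point out of its equivalence class, it moves at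
least two points out of their classes. -/
lemma exists_second_offblock {α : Type*} [Fintype α] [DecidableEq α]
    (r' : α → α → Prop) (hr' : Equivalence r') (σ : Equiv.Perm α) (b : α)
    (hb : ¬ r' (σ b) b) : ∃ b', b' ≠ b ∧ ¬ r' (σ b') b' := by
  by_contra hcon
  push_neg at hcon
  classical
  set C : Finset α := Finset.univ.filter (fun x => r' x b) with hC
  have hbC : b ∈ C := by simp [hC, hr'.refl b]
  have himg : (C.erase b).image σ ⊆ C := by
    intro y hy
    obtain ⟨x, hx, rfl⟩ := Finset.mem_image.mp hy
    have hxb : x ≠ b := Finset.ne_of_mem_erase hx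
    have hxC : r' x b := (Finset.mem_filter.mp (Finset.mem_of_mem_erase hx)).2
    exact Finset.mem_filter.mpr ⟨Finset.mem_univ _, hr'.trans (hcon x hxb) hxC⟩
  have hcard : ((C.erase b).image σ).card < C.card := by
    rw [Finset.card_image_of_injective _ σ.injective]
    have := Finset.card_erase_lt_of_mem hbC
    omega
  have hss : (C.erase b).image σ ⊂ C :=
    (Finset.ssubset_iff_of_subset himg).mpr (by
      by_contra h
      push_neg at h
      have : C ⊆ (C.erase b).image σ := fun x hx => h x hx
      exact absurd (Finset.card_le_card this) (by omega))
  obtain ⟨c, hcC, hcD⟩ := Finset.exists_of_ssubset hss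
  have hcb : r' c b := (Finset.mem_filter.mp hcC).2
  set x := σ.symm c with hx
  have hσx : σ x = c := σ.apply_symm_apply c
  by_cases hxb : x = b
  · rw [hxb] at hσx
    exact hb (hσx ▸ hcb)
  · have hrx : r' c x := hσx ▸ hcon x hxb
    have hxC : x ∈ C :=
      Finset.mem_filter.mpr ⟨Finset.mem_univ _, hr'.trans (hr'.symm hrx) hcb⟩
    exact hcD (Finset.mem_image.mpr ⟨x, Finset.mem_erase.mpr ⟨hxb, hxC⟩, hσx⟩)

/-- Let `∼` be an equivalence relation on `[n]` (a partition into blocks) and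
`A` a symmetric matrix (given as a function on unordered pairs) which is block
diagonal: `A_{ij} = 0` for `i ≁ j`. Then for every `i ≁ j`, the partial
derivative of the principal minor `det(X_B)` with respect to the off-block
entry `X_{ij}`, evaluated at `A`, is zero. -/
theorem pderiv_offblock_det_eq_zero {n : ℕ} (r : Fin n → Fin n → Prop)
    (hr : Equivalence r) (A : Sym2 (Fin n) → ℝ)
    (hA : ∀ i j, ¬ r i j → A (Sym2.mk i j) = 0)
    (B : Finset (Fin n)) (i j : Fin n) (hij : ¬ r i j) :
    eval A (pderiv (Sym2.mk i j) (genericPrincipalMinor n B)) = 0 := by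
  classical
  set v : Sym2 (Fin n) := Sym2.mk i j with hv
  rw [genericPrincipalMinor, Matrix.det_apply, map_sum, map_sum]
  apply Finset.sum_eq_zero
  intro σ _
  have key : eval A (pderiv v
      (∏ b : B, X (Sym2.mk ((σ b : B) : Fin n) (b : Fin n)) :
        MvPolynomial (Sym2 (Fin n)) ℝ)) = 0 := by
    rw [pderiv_finset_prod, map_sum]
    apply Finset.sum_eq_zero
    intro b _
    by_cases h : Sym2.mk ((σ b : B) : Fin n) (b : Fin n) = v
    · -- the differentiated factor is the variable v; find a second offblock factor
      have hrb : ¬ r ((σ b : B) : Fin n) (b : Fin n) := by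
        rw [hv, Sym2.mk_eq_mk_iff (p := (((σ b : B) : Fin n), (b : Fin n))) (q := (i, j))] at h
        rcases h with h | h
        · simp only [Prod.mk.injEq] at h
          rw [h.1, h.2]; exact hij
        · simp only [Prod.swap_prod_mk, Prod.mk.injEq] at h
          rw [h.1, h.2]; exact fun hh => hij (hr.symm hh)
      obtain ⟨b', hb'b, hb'⟩ := exists_second_offblock
        (fun x y : B => r x y) ⟨fun x => hr.refl _, hr.symm, hr.trans⟩ σ b hrb
      rw [map_mul, map_prod]
      apply mul_eq_zero_of_left
      apply Finset.prod_eq_zero (Finset.mem_erase.mpr ⟨hb'b, Finset.mem_univ _⟩)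
      rw [eval_X]
      exact hA _ _ hb'
    · rw [pderiv_X_of_ne h, mul_zero, map_zero]
  have : eval A (pderiv v (Equiv.Perm.sign σ •
      ∏ b : B, ((genericSymMatrix n).submatrix (fun i : B => (i : Fin n))
        (fun i : B => (i : Fin n))) (σ b) b)) =
      (Equiv.Perm.sign σ : ℤ) • eval A (pderiv v
        (∏ b : B, X (Sym2.mk ((σ b : B) : Fin n) (b : Fin n)) :
          MvPolynomial (Sym2 (Fin n)) ℝ)) := by
    rw [Units.smul_def, map_zsmul, map_zsmul]
    rfl
  rw [this, key, smul_zero]
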